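/- Let E be a real symmetric k×k matrix. Then the sum of the absolute values of the eigenvalues of E is at most the sum of the absolute values of the entries of E. -/

import Mathlib

/-- For a real symmetric `k × k` matrix, the sum of absolute values of its eigenvalues is at
most the sum of absolute values of its entries. -/
theorem stmt_7 {k : ℕ} (E : Matrix (Fin k) (Fin k) ℝ) (hE : E.IsHermitian) :
    ∑ i, |hE.eigenvalues i| ≤ ∑ i, ∑ j, |E i j| := by
  set U : Matrix (Fin k) (Fin k) ℝ := (hE.eigenvectorUnitary : Matrix (Fin k) (Fin k) ℝ) with hU
  have hdiag : (star (hE.eigenvectorUnitary : Matrix (Fin k) (Fin k) ℝ)) * E * (hE.eigenvectorUnitary : Matrix (Fin k) (Fin k) ℝ) = Matrix.diagonal (RCLike.ofReal ∘ hE.eigenvalues) := by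
    rw [← Unitary.conjStarAlgAut_star_apply (S := ℝ), hE.conjStarAlgAut_star_eigenvectorUnitary]
  -- rows of U have unit norm
  have hrow : ∀ j, ∑ i, (U j i)^2 = 1 := by
    intro j
    have h1 : U * star U = 1 := Unitary.coe_mul_star_self hE.eigenvectorUnitary
    have := congrFun (congrFun h1 j) j
    simpa [Matrix.mul_apply, Matrix.star_apply, sq, Matrix.one_apply] using this
  have heig : ∀ i, hE.eigenvalues i = ∑ j, ∑ l, U j i * E j l * U l i := by
    intro i
    have := congrFun (congrFun hdiag i) i
    simp only [Matrix.diagonal_apply_eq, Function.comp_apply, RCLike.ofReal_real_eq_id, id_eq] at this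
    rw [← this, Matrix.mul_apply]
    simp only [Matrix.mul_apply, Matrix.star_apply, star_trivial, Finset.sum_mul]
    rw [Finset.sum_comm]
  calc ∑ i, |hE.eigenvalues i| ≤ ∑ i, ∑ j, ∑ l, |U j i| * |E j l| * |U l i| := by
        apply Finset.sum_le_sum
        intro i _
        rw [heig i]
        refine (Finset.abs_sum_le_sum_abs _ _).trans ?_
        apply Finset.sum_le_sum
        intro j _
        refine (Finset.abs_sum_le_sum_abs _ _).trans ?_
        apply Finset.sum_le_sum
        intro l _
        rw [abs_mul, abs_mul]
    _ = ∑ j, ∑ l, |E j l| * ∑ i, |U j i| * |U l i| := by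
        rw [Finset.sum_comm]
        congr 1; ext j
        rw [Finset.sum_comm]
        congr 1; ext l
        rw [Finset.mul_sum]
        congr 1; ext i; ring
    _ ≤ ∑ j, ∑ l, |E j l| * 1 := by
        apply Finset.sum_le_sum; intro j _
        apply Finset.sum_le_sum; intro l _
        apply mul_le_mul_of_nonneg_left _ (abs_nonneg _)
        have hs : (∑ i, |U j i| * |U l i|)^2 ≤ 1 := by
          calc (∑ i, |U j i| * |U l i|)^2
              ≤ (∑ i, |U j i|^2) * (∑ i, |U l i|^2) :=
                Finset.sum_mul_sq_le_sq_mul_sq _ _ _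
            _ = 1 := by
                simp only [sq_abs]
                rw [hrow, hrow, mul_one]
        nlinarith [Finset.sum_nonneg (fun i (_ : i ∈ Finset.univ) =>
          mul_nonneg (abs_nonneg (U j i)) (abs_nonneg (U l i)))]
    _ = ∑ i, ∑ j, |E i j| := by simp
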